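/- For R > 1 and ρ₂ with 1 < ρ₂ < R, the improper integral ∫_{ρ₂}^{R} f(ρ,R) dρ is finite and satisfies ∫_{ρ₂}^{R} f(ρ,R) dρ ≤ (1/(ρ₂² − 1))·(π/2 − arcsin(exp(μ(ρ₂) − μ(R)))), where f and μ are as defined. -/

import Mathlib

open Real MeasureTheory

/-- μ(x) = x²/2 − log x. -/
noncomputable def mu (x : ℝ) : ℝ := x ^ 2 / 2 - Real.log x

/-- f(ρ, R) = exp(μ(ρ)−μ(R)) / (ρ √(1 − exp(2(μ(ρ)−μ(R))))). -/
noncomputable def f (ρ R : ℝ) : ℝ :=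
  Real.exp (mu ρ - mu R) / (ρ * Real.sqrt (1 - Real.exp (2 * (mu ρ - mu R))))

lemma mu_hasDerivAt {x : ℝ} (hx : 0 < x) : HasDerivAt mu (x - x⁻¹) x := by
  have h := ((hasDerivAt_pow 2 x).div_const 2).sub (Real.hasDerivAt_log (ne_of_gt hx))
  have : HasDerivAt (fun y : ℝ => y ^ 2 / 2 - Real.log y) (x - x⁻¹) x := by
    refine h.congr_deriv ?_
    push_cast
    ring
  exact this

lemma mu_strictMonoOn : StrictMonoOn mu (Set.Ici 1) := by
  apply strictMonoOn_of_deriv_pos (convex_Ici 1)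
  · intro x hx
    exact ((mu_hasDerivAt (lt_of_lt_of_le one_pos hx)).continuousAt).continuousWithinAt
  · intro x hx
    rw [interior_Ici] at hx
    have h0 : 0 < x := lt_trans one_pos hx
    rw [(mu_hasDerivAt h0).deriv]
    have hx1 : (1:ℝ) < x := hx
    have h1 : x * x⁻¹ = 1 := mul_inv_cancel₀ (ne_of_gt h0)
    nlinarith [mul_pos (sub_pos.mpr hx1) (inv_pos.mpr h0)]

/-- The bound on compact subintervals `[ρ₂, r]` with `r < R`. -/
lemma compact_piece (R ρ₂ r : ℝ) (hR : 1 < R) (hρ₂ : 1 < ρ₂) (hr₁ : ρ₂ ≤ r) (hr₂ : r < R) :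
    IntegrableOn (fun ρ => f ρ R) (Set.Ioc ρ₂ r) ∧
    ∫ x in Set.Ioc ρ₂ r, ‖f x R‖ ≤
      1 / (ρ₂ ^ 2 - 1) * (Real.pi / 2 - Real.arcsin (Real.exp (mu ρ₂ - mu R))) := by
  have hc : (0:ℝ) < ρ₂ ^ 2 - 1 := by nlinarith
  -- basic facts on Icc ρ₂ r
  have hfacts : ∀ ρ ∈ Set.Icc ρ₂ r, 1 < ρ ∧ Real.exp (mu ρ - mu R) < 1 := by
    intro ρ hρ
    have h1 : 1 < ρ := lt_of_lt_of_le hρ₂ hρ.1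
    have hmu : mu ρ < mu R :=
      mu_strictMonoOn (le_of_lt h1) (le_of_lt hR) (lt_of_le_of_lt hρ.2 hr₂)
    exact ⟨h1, Real.exp_lt_one_iff.mpr (by linarith)⟩
  have hsq : ∀ ρ ∈ Set.Icc ρ₂ r, Real.exp (2 * (mu ρ - mu R)) = Real.exp (mu ρ - mu R) ^ 2 := by
    intro ρ _
    rw [two_mul, Real.exp_add, sq]
  have hspos : ∀ ρ ∈ Set.Icc ρ₂ r, 0 < Real.sqrt (1 - Real.exp (mu ρ - mu R) ^ 2) := by
    intro ρ hρ
    have h := (hfacts ρ hρ).2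
    have h0 : 0 < Real.exp (mu ρ - mu R) := Real.exp_pos _
    apply Real.sqrt_pos.mpr
    nlinarith
  -- continuity of f on Icc
  have hmucont : ContinuousOn mu (Set.Icc ρ₂ r) := fun x hx =>
    ((mu_hasDerivAt (lt_trans one_pos (hfacts x hx).1)).continuousAt).continuousWithinAt
  have hecont : ContinuousOn (fun ρ => Real.exp (mu ρ - mu R)) (Set.Icc ρ₂ r) :=
    Real.continuous_exp.comp_continuousOn (hmucont.sub continuousOn_const)
  have hfcont : ContinuousOn (fun ρ => f ρ R) (Set.Icc ρ₂ r) := by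
    apply ContinuousOn.div hecont
    · exact continuousOn_id.mul (Real.continuous_sqrt.comp_continuousOn
        (continuousOn_const.sub (Real.continuous_exp.comp_continuousOn
          ((continuousOn_const.mul (hmucont.sub continuousOn_const))))))
    · intro x hx
      have h1 := (hfacts x hx).1
      have : 0 < x * Real.sqrt (1 - Real.exp (2 * (mu x - mu R))) := by
        rw [hsq x hx]
        exact mul_pos (lt_trans one_pos h1) (hspos x hx)
      exact ne_of_gt this
  have hint_f : IntervalIntegrable (fun ρ => f ρ R) volume ρ₂ r := by
    apply ContinuousOn.intervalIntegrable
    rwa [Set.uIcc_of_le hr₁]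
  -- derivative of the comparison function
  set c : ℝ := 1 / (ρ₂ ^ 2 - 1) with hcdef
  have hcpos : 0 < c := by positivity
  set g : ℝ → ℝ := fun ρ => c * Real.arcsin (Real.exp (mu ρ - mu R)) with hgdef
  set g' : ℝ → ℝ := fun ρ =>
    c * (1 / Real.sqrt (1 - Real.exp (mu ρ - mu R) ^ 2) *
      (Real.exp (mu ρ - mu R) * (ρ - ρ⁻¹))) with hg'def
  have hderiv : ∀ ρ ∈ Set.uIcc ρ₂ r, HasDerivAt g (g' ρ) ρ := by
    intro ρ hρ
    rw [Set.uIcc_of_le hr₁] at hρ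
    have h1 := (hfacts ρ hρ).1
    have h0 : 0 < ρ := lt_trans one_pos h1
    have hu1 := (hfacts ρ hρ).2
    have hu0 : 0 < Real.exp (mu ρ - mu R) := Real.exp_pos _
    have he : HasDerivAt (fun ρ => Real.exp (mu ρ - mu R))
        (Real.exp (mu ρ - mu R) * (ρ - ρ⁻¹)) ρ :=
      ((mu_hasDerivAt h0).sub_const (mu R)).exp
    have ha := (Real.hasDerivAt_arcsin (by linarith) (ne_of_lt hu1)).comp ρ he
    exact ha.const_mul c
  have hg'cont : ContinuousOn g' (Set.Icc ρ₂ r) := by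
    apply ContinuousOn.mul continuousOn_const
    apply ContinuousOn.mul
    · apply ContinuousOn.div continuousOn_const
      · exact Real.continuous_sqrt.comp_continuousOn
          (continuousOn_const.sub (hecont.pow 2))
      · intro x hx; exact ne_of_gt (hspos x hx)
    · exact hecont.mul (continuousOn_id.sub
        (continuousOn_id.inv₀ (fun x hx => ne_of_gt (lt_trans one_pos (hfacts x hx).1))))
  have hint_g' : IntervalIntegrable g' volume ρ₂ r := by
    apply ContinuousOn.intervalIntegrable
    rwa [Set.uIcc_of_le hr₁]
  have hftc : ∫ x in ρ₂..r, g' x = g r - g ρ₂ :=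
    intervalIntegral.integral_eq_sub_of_hasDerivAt hderiv hint_g'
  -- pointwise bound f ≤ g'
  have hle : ∀ ρ ∈ Set.Icc ρ₂ r, f ρ R ≤ g' ρ := by
    intro ρ hρ
    have h1 := (hfacts ρ hρ).1
    have h0 : 0 < ρ := lt_trans one_pos h1
    have hu0 : 0 < Real.exp (mu ρ - mu R) := Real.exp_pos _
    have hs := hspos ρ hρ
    have hρ₂le : ρ₂ ≤ ρ := hρ.1
    have hkey : g' ρ = (ρ ^ 2 - 1) / (ρ₂ ^ 2 - 1) *
        (Real.exp (mu ρ - mu R) / (ρ * Real.sqrt (1 - Real.exp (mu ρ - mu R) ^ 2))) := by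
      simp only [hg'def, hcdef]
      field_simp
    have hf : f ρ R = Real.exp (mu ρ - mu R) /
        (ρ * Real.sqrt (1 - Real.exp (mu ρ - mu R) ^ 2)) := by
      rw [f, hsq ρ hρ]
    rw [hf, hkey]
    have hbase : 0 ≤ Real.exp (mu ρ - mu R) /
        (ρ * Real.sqrt (1 - Real.exp (mu ρ - mu R) ^ 2)) := by positivity
    have hk : 1 ≤ (ρ ^ 2 - 1) / (ρ₂ ^ 2 - 1) := by
      rw [le_div_iff₀ hc]
      nlinarith
    nlinarith
  -- first part: integrability on Ioc
  refine ⟨(hfcont.integrableOn_Icc).mono_set Set.Ioc_subset_Icc_self, ?_⟩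
  -- the norm equals f on the set
  have hnorm : ∫ x in Set.Ioc ρ₂ r, ‖f x R‖ = ∫ x in ρ₂..r, f x R := by
    rw [intervalIntegral.integral_of_le hr₁]
    apply setIntegral_congr_fun measurableSet_Ioc
    intro x hx
    have hx' : x ∈ Set.Icc ρ₂ r := Set.Ioc_subset_Icc_self hx
    have h0 : 0 < x := lt_trans one_pos (hfacts x hx').1
    have hs := hspos x hx'
    have : 0 ≤ f x R := by
      rw [f, hsq x hx']
      positivity
    simp [Real.norm_eq_abs, abs_of_nonneg this]
  rw [hnorm]
  have hmono := intervalIntegral.integral_mono_on hr₁ hint_f hint_g' hle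
  have harc : Real.arcsin (Real.exp (mu r - mu R)) ≤ Real.pi / 2 :=
    Real.arcsin_le_pi_div_two _
  calc ∫ x in ρ₂..r, f x R ≤ ∫ x in ρ₂..r, g' x := hmono
    _ = g r - g ρ₂ := hftc
    _ ≤ c * (Real.pi / 2 - Real.arcsin (Real.exp (mu ρ₂ - mu R))) := by
        simp only [hgdef]
        nlinarith
  
theorem integral_f_tail_bound (R ρ₂ : ℝ) (hR : 1 < R) (hρ₂ : 1 < ρ₂) (hρ₂R : ρ₂ < R) :
    IntegrableOn (fun ρ => f ρ R) (Set.Ioo ρ₂ R) ∧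
    ∫ ρ in ρ₂..R, f ρ R ≤
      1 / (ρ₂ ^ 2 - 1) * (Real.pi / 2 - Real.arcsin (Real.exp (mu ρ₂ - mu R))) := by
  set b : ℕ → ℝ := fun n => R - (R - ρ₂) / (n + 1) with hbdef
  have hbmem : ∀ n : ℕ, ρ₂ ≤ b n ∧ b n < R := by
    intro n
    have h1 : (0:ℝ) < (n:ℝ) + 1 := by positivity
    have h2 : (R - ρ₂) / ((n:ℝ) + 1) ≤ R - ρ₂ := by
      apply div_le_self (by linarith) (by linarith [Nat.cast_nonneg (α := ℝ) n])
    have h3 : (0:ℝ) < (R - ρ₂) / ((n:ℝ) + 1) := div_pos (by linarith) h1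
    constructor
    · simp only [hbdef]; linarith
    · simp only [hbdef]; linarith
  have hbtend : Filter.Tendsto b Filter.atTop (nhds R) := by
    have h0 : Filter.Tendsto (fun n : ℕ => (R - ρ₂) * (1 / ((n:ℝ) + 1))) Filter.atTop (nhds 0) := by
      simpa using tendsto_one_div_add_atTop_nhds_zero_nat.const_mul (R - ρ₂)
    have := Filter.Tendsto.sub (tendsto_const_nhds (x := R)) h0
    simp only [sub_zero] at this
    convert this using 2 with n
    simp only [hbdef]
    ring
  have hpiece := fun n : ℕ => compact_piece R ρ₂ (b n) hR hρ₂ (hbmem n).1 (hbmem n).2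
  have hintIoc : IntegrableOn (fun ρ => f ρ R) (Set.Ioc ρ₂ R) :=
    MeasureTheory.integrableOn_Ioc_of_intervalIntegral_norm_bounded_right
      (fun n => (hpiece n).1) hbtend (Filter.Eventually.of_forall fun n => (hpiece n).2)
  refine ⟨hintIoc.mono_set Set.Ioo_subset_Ioc_self, ?_⟩
  have hintIoo : IntegrableOn (fun ρ => f ρ R) (Set.Ioo ρ₂ R) :=
    hintIoc.mono_set Set.Ioo_subset_Ioc_self
  rw [intervalIntegral.integral_of_le hρ₂R.le, MeasureTheory.integral_Ioc_eq_integral_Ioo]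
  have hmono : Monotone (fun n => Set.Ioc ρ₂ (b n)) := by
    intro m n hmn
    apply Set.Ioc_subset_Ioc le_rfl
    simp only [hbdef]
    have : (R - ρ₂) / ((n:ℝ) + 1) ≤ (R - ρ₂) / ((m:ℝ) + 1) := by
      gcongr <;> first
        | linarith
        | exact_mod_cast hmn
    linarith
  have hunion : (⋃ n, Set.Ioc ρ₂ (b n)) = Set.Ioo ρ₂ R := by
    ext x
    simp only [Set.mem_iUnion, Set.mem_Ioc, Set.mem_Ioo]
    constructor
    · rintro ⟨n, h1, h2⟩
      exact ⟨h1, lt_of_le_of_lt h2 (hbmem n).2⟩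
    · rintro ⟨h1, h2⟩
      obtain ⟨n, hn⟩ := exists_nat_ge ((R - ρ₂) / (R - x))
      refine ⟨n, h1, ?_⟩
      have hx0 : 0 < R - x := by linarith
      have h3 : (R - ρ₂) / (R - x) ≤ (n:ℝ) + 1 := by linarith
      have h4 : R - ρ₂ ≤ ((n:ℝ) + 1) * (R - x) := by
        rw [div_le_iff₀ hx0] at h3
        linarith
      have h5 : (R - ρ₂) / ((n:ℝ) + 1) ≤ R - x := by
        rw [div_le_iff₀ (by positivity)]
        nlinarith
      simp only [hbdef]
      linarith
  have htend := MeasureTheory.tendsto_setIntegral_of_monotone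
    (fun n => measurableSet_Ioc) hmono (hunion ▸ hintIoo) (f := fun ρ => f ρ R) (μ := volume)
  rw [hunion] at htend
  apply le_of_tendsto htend
  apply Filter.Eventually.of_forall
  intro n
  calc ∫ x in Set.Ioc ρ₂ (b n), f x R ≤ ‖∫ x in Set.Ioc ρ₂ (b n), f x R‖ :=
        le_abs_self _
    _ ≤ ∫ x in Set.Ioc ρ₂ (b n), ‖f x R‖ := norm_integral_le_integral_norm _
    _ ≤ _ := (hpiece n).2
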